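/- Fix M ≥ 1, p_u > 0, β_1,…,β_N > 0, an index n, and real numbers φ_{ni} for i ≠ n. For K ≥ 0 define the MRC rate approximation with common Ricean factor K: R̃(K) = log₂( 1 + p_u·β_n·(2MK + M + M²(K+1)²) / ( p_u·Σ_{i≠n} β_i·(K²·φ_{ni}² + 2MK + M) + M·(K+1)² ) ). Then as K → ∞, R̃(K) → log₂( 1 + p_u·β_n·M² / ( p_u·Σ_{i≠n} β_i·φ_{ni}² + M ) ). -/

import Mathlib

open Filter Finset Real

/-- Limit, as the common Ricean factor `K → ∞`, of the closed-form MRC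
rate approximation with perfect CSI. -/
theorem mrc_rate_approx_limit_K
    (N M : ℕ) (hM : 1 ≤ M) (pu : ℝ) (hpu : 0 < pu)
    (β : Fin N → ℝ) (hβ : ∀ i, 0 < β i) (n : Fin N) (φ : Fin N → ℝ) :
    Filter.Tendsto (fun K : ℝ =>
        Real.logb 2 (1 + pu * β n * (2 * M * K + M + (M : ℝ) ^ 2 * (K + 1) ^ 2) /
          (pu * ∑ i ∈ Finset.univ.erase n, β i * (K ^ 2 * φ i ^ 2 + 2 * M * K + M)
            + M * (K + 1) ^ 2)))
      Filter.atTop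
      (nhds (Real.logb 2 (1 + pu * β n * (M : ℝ) ^ 2 /
          (pu * ∑ i ∈ Finset.univ.erase n, β i * φ i ^ 2 + M)))) := by
  set S : ℝ := ∑ i ∈ Finset.univ.erase n, β i * φ i ^ 2 with hS
  have hM0 : (0:ℝ) < (M:ℝ) := by exact_mod_cast Nat.lt_of_lt_of_le Nat.zero_lt_one hM
  have hS0 : 0 ≤ S :=
    Finset.sum_nonneg fun i _ => mul_nonneg (hβ i).le (sq_nonneg _)
  have hL : (0:ℝ) < pu * S + M := by positivity
  set Nf : ℝ → ℝ := fun x => pu * β n * (2 * M * x + M * x ^ 2 + (M:ℝ) ^ 2 * (1 + x) ^ 2)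
    with hNf
  set Df : ℝ → ℝ := fun x =>
    pu * ∑ i ∈ Finset.univ.erase n, β i * (φ i ^ 2 + 2 * M * x + M * x ^ 2)
      + M * (1 + x) ^ 2 with hDf
  have hNc : Continuous Nf := by unfold Nf; continuity
  have hDc : Continuous Df := by unfold Df; fun_prop
  have hinv : Tendsto (fun K : ℝ => K⁻¹) atTop (nhds 0) := tendsto_inv_atTop_zero
  have hN : Tendsto (fun K : ℝ => Nf K⁻¹) atTop (nhds (pu * β n * (M:ℝ) ^ 2)) := by
    have h := (hNc.tendsto 0).comp hinv
    have h0 : Nf 0 = pu * β n * (M:ℝ) ^ 2 := by simp [hNf]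
    rw [h0] at h
    exact h
  have hD : Tendsto (fun K : ℝ => Df K⁻¹) atTop (nhds (pu * S + M)) := by
    have h := (hDc.tendsto 0).comp hinv
    have h0 : Df 0 = pu * S + M := by simp [hDf, hS]
    rw [h0] at h
    exact h
  have hfrac : Tendsto (fun K : ℝ => Nf K⁻¹ / Df K⁻¹) atTop
      (nhds (pu * β n * (M:ℝ) ^ 2 / (pu * S + M))) := hN.div hD hL.ne'
  have key : Tendsto (fun K : ℝ =>
      1 + pu * β n * (2 * M * K + M + (M : ℝ) ^ 2 * (K + 1) ^ 2) /
        (pu * ∑ i ∈ Finset.univ.erase n, β i * (K ^ 2 * φ i ^ 2 + 2 * M * K + M)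
          + M * (K + 1) ^ 2)) atTop
      (nhds (1 + pu * β n * (M:ℝ) ^ 2 / (pu * S + M))) := by
    refine Tendsto.const_add 1 (hfrac.congr' ?_)
    filter_upwards [eventually_gt_atTop (0:ℝ)] with K hK
    have hK0 : K ≠ 0 := hK.ne'
    have hnum : pu * β n * (2 * M * K + M + (M : ℝ) ^ 2 * (K + 1) ^ 2)
        = K ^ 2 * Nf K⁻¹ := by
      simp only [hNf]; field_simp
    have hsum : K ^ 2 * ∑ i ∈ Finset.univ.erase n,
          β i * (φ i ^ 2 + 2 * M * K⁻¹ + M * K⁻¹ ^ 2)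
        = ∑ i ∈ Finset.univ.erase n, β i * (K ^ 2 * φ i ^ 2 + 2 * M * K + M) := by
      rw [Finset.mul_sum]
      refine Finset.sum_congr rfl fun i _ => ?_
      field_simp
    have hden : pu * ∑ i ∈ Finset.univ.erase n, β i * (K ^ 2 * φ i ^ 2 + 2 * M * K + M)
        + M * (K + 1) ^ 2 = K ^ 2 * Df K⁻¹ := by
      have h1 : K ^ 2 * Df K⁻¹
          = pu * (K ^ 2 * ∑ i ∈ Finset.univ.erase n,
              β i * (φ i ^ 2 + 2 * M * K⁻¹ + M * K⁻¹ ^ 2))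
            + K ^ 2 * ((M:ℝ) * (1 + K⁻¹) ^ 2) := by
        simp only [hDf]
        ring
      rw [h1, hsum]
      have h2 : K ^ 2 * ((M:ℝ) * (1 + K⁻¹) ^ 2) = M * (K + 1) ^ 2 := by
        field_simp
      rw [h2]
    rw [hnum, hden, mul_div_mul_left _ _ (pow_ne_zero 2 hK0)]
  have hne : (1 : ℝ) + pu * β n * (M:ℝ) ^ 2 / (pu * S + M) ≠ 0 := by
    have hb := hβ n
    have hx : 0 ≤ pu * β n * (M:ℝ) ^ 2 / (pu * S + M) := by positivity
    linarith
  exact ((Real.continuousAt_logb hne).tendsto).comp key
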